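/- Fix m_v ≥ 0, m_i ≥ 0 and vT ∈ ℝ². Then the infimum over qT ∈ ℝ² of the transverse mass m_T(m_v, vT, m_i, qT) equals m_v + m_i. Moreover, if m_v > 0 the infimum is attained at qT = (m_i/m_v)·vT. -/

import Mathlib

open scoped RealInnerProductSpace

/-- Transverse energy `e(m,p) = √(m² + |p|²)`. -/
noncomputable def transverseEnergy (m : ℝ) (p : EuclideanSpace ℝ (Fin 2)) : ℝ :=
  Real.sqrt (m ^ 2 + ‖p‖ ^ 2)

/-- Transverse mass `m_T(m_v, vT, m_i, qT)`. -/
noncomputable def transverseMass (mv : ℝ) (vT : EuclideanSpace ℝ (Fin 2))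
    (mi : ℝ) (qT : EuclideanSpace ℝ (Fin 2)) : ℝ :=
  Real.sqrt (mv ^ 2 + mi ^ 2 +
    2 * (transverseEnergy mv vT * transverseEnergy mi qT - ⟪vT, qT⟫))

/-- Cauchy–Schwarz type inequality in ℝ³: `mv·mi + a·b ≤ √(mv²+a²)·√(mi²+b²)`. -/
lemma key_ineq (mv mi a b : ℝ) (hmv : 0 ≤ mv) (hmi : 0 ≤ mi) (ha : 0 ≤ a) (hb : 0 ≤ b) :
    mv * mi + a * b ≤ Real.sqrt (mv ^ 2 + a ^ 2) * Real.sqrt (mi ^ 2 + b ^ 2) := by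
  have h1 : Real.sqrt (mv ^ 2 + a ^ 2) ^ 2 = mv ^ 2 + a ^ 2 :=
    Real.sq_sqrt (by positivity)
  have h2 : Real.sqrt (mi ^ 2 + b ^ 2) ^ 2 = mi ^ 2 + b ^ 2 :=
    Real.sq_sqrt (by positivity)
  have h3 := Real.sqrt_nonneg (mv ^ 2 + a ^ 2)
  have h4 := Real.sqrt_nonneg (mi ^ 2 + b ^ 2)
  nlinarith [sq_nonneg (mv * b - a * mi),
    sq_nonneg (Real.sqrt (mv ^ 2 + a ^ 2) * Real.sqrt (mi ^ 2 + b ^ 2) - mv * mi - a * b),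
    mul_nonneg h3 h4, mul_nonneg (mul_nonneg hmv hmi) (mul_nonneg ha hb)]

/-- The transverse mass is always at least `mv + mi`. -/
lemma tm_lower (mv mi : ℝ) (hmv : 0 ≤ mv) (hmi : 0 ≤ mi)
    (vT qT : EuclideanSpace ℝ (Fin 2)) : mv + mi ≤ transverseMass mv vT mi qT := by
  have hcs : ⟪vT, qT⟫ ≤ ‖vT‖ * ‖qT‖ := real_inner_le_norm vT qT
  have hkey := key_ineq mv mi ‖vT‖ ‖qT‖ hmv hmi (norm_nonneg _) (norm_nonneg _)
  have hS : (mv + mi) ^ 2 ≤ mv ^ 2 + mi ^ 2 +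
      2 * (transverseEnergy mv vT * transverseEnergy mi qT - ⟪vT, qT⟫) := by
    unfold transverseEnergy
    nlinarith
  calc mv + mi = Real.sqrt ((mv + mi) ^ 2) := (Real.sqrt_sq (by linarith)).symm
    _ ≤ _ := Real.sqrt_le_sqrt hS

/-- For `mv > 0` the value `mv + mi` is attained at `(mi/mv) • vT`. -/
lemma tm_attained (mv mi : ℝ) (hmv : 0 < mv) (hmi : 0 ≤ mi)
    (vT : EuclideanSpace ℝ (Fin 2)) :
    transverseMass mv vT mi ((mi / mv) • vT) = mv + mi := by
  set c : ℝ := mi / mv with hc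
  have hc0 : 0 ≤ c := div_nonneg hmi hmv.le
  have hmic : mi = c * mv := by rw [hc, div_mul_cancel₀ mi hmv.ne']
  have hnorm : ‖c • vT‖ = c * ‖vT‖ := by
    rw [norm_smul, Real.norm_eq_abs, abs_of_nonneg hc0]
  have hE : transverseEnergy mi (c • vT) = c * Real.sqrt (mv ^ 2 + ‖vT‖ ^ 2) := by
    unfold transverseEnergy
    rw [hnorm, hmic]
    rw [show (c * mv) ^ 2 + (c * ‖vT‖) ^ 2 = c ^ 2 * (mv ^ 2 + ‖vT‖ ^ 2) by ring]
    rw [Real.sqrt_mul (sq_nonneg c), Real.sqrt_sq hc0]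
  have hinner : ⟪vT, c • vT⟫ = c * ‖vT‖ ^ 2 := by
    rw [real_inner_smul_right, real_inner_self_eq_norm_sq]
  have hEv2 : Real.sqrt (mv ^ 2 + ‖vT‖ ^ 2) ^ 2 = mv ^ 2 + ‖vT‖ ^ 2 :=
    Real.sq_sqrt (by positivity)
  unfold transverseMass transverseEnergy
  rw [hinner]
  have : Real.sqrt (mv ^ 2 + ‖vT‖ ^ 2) * transverseEnergy mi (c • vT) - c * ‖vT‖ ^ 2
      = mv * mi := by
    rw [hE]; nlinarith
  rw [show transverseEnergy mi (c • vT) = Real.sqrt (mi ^ 2 + ‖c • vT‖ ^ 2) from rfl] at this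
  rw [this, show mv ^ 2 + mi ^ 2 + 2 * (mv * mi) = (mv + mi) ^ 2 by ring,
    Real.sqrt_sq (by linarith)]

/-- For `mv = 0` the transverse mass gets within `ε` of `mi`. -/
lemma tm_zero_case (mi : ℝ) (hmi : 0 ≤ mi) (vT : EuclideanSpace ℝ (Fin 2))
    (ε : ℝ) (hε : 0 < ε) :
    ∃ q : EuclideanSpace ℝ (Fin 2), transverseMass 0 vT mi q ≤ mi + ε := by
  have hE0 : transverseEnergy 0 vT = ‖vT‖ := by
    unfold transverseEnergy
    rw [show (0:ℝ) ^ 2 + ‖vT‖ ^ 2 = ‖vT‖ ^ 2 by ring, Real.sqrt_sq (norm_nonneg _)]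
  rcases eq_or_lt_of_le hmi with hmi0 | hmi0
  · -- mi = 0 : take q = vT
    refine ⟨vT, ?_⟩
    subst hmi0
    unfold transverseMass
    rw [hE0, real_inner_self_eq_norm_sq]
    rw [show (0:ℝ) ^ 2 + 0 ^ 2 + 2 * (‖vT‖ * ‖vT‖ - ‖vT‖ ^ 2) = 0 by ring, Real.sqrt_zero]
    linarith
  rcases eq_or_lt_of_le (norm_nonneg vT) with hv0 | hv0
  · -- vT = 0 : take q = 0
    refine ⟨0, ?_⟩
    unfold transverseMass
    rw [hE0, ← hv0]
    have : transverseEnergy mi 0 = mi := by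
      unfold transverseEnergy
      simp [Real.sqrt_sq hmi]
    rw [this]
    simp only [inner_zero_right]
    rw [show (0:ℝ) ^ 2 + mi ^ 2 + 2 * (0 * mi - 0) = mi ^ 2 by ring, Real.sqrt_sq hmi]
    linarith
  · -- mi > 0, ‖vT‖ > 0 : take q = t • vT with t = mi / (2ε)
    set t : ℝ := mi / (2 * ε) with ht
    have ht0 : 0 < t := by positivity
    refine ⟨t • vT, ?_⟩
    set s : ℝ := t * ‖vT‖ with hs
    have hs0 : 0 < s := by positivity
    have hnorm : ‖t • vT‖ = s := by
      rw [norm_smul, Real.norm_eq_abs, abs_of_nonneg ht0.le]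
    have hinner : ⟪vT, t • vT⟫ = t * ‖vT‖ ^ 2 := by
      rw [real_inner_smul_right, real_inner_self_eq_norm_sq]
    have hsqrt : Real.sqrt (mi ^ 2 + s ^ 2) ≤ s + mi ^ 2 / (2 * s) := by
      have hd : 2 * s * (mi ^ 2 / (2 * s)) = mi ^ 2 := by field_simp
      have h : mi ^ 2 + s ^ 2 ≤ (s + mi ^ 2 / (2 * s)) ^ 2 := by
        nlinarith [sq_nonneg (mi ^ 2 / (2 * s))]
      calc Real.sqrt (mi ^ 2 + s ^ 2) ≤ Real.sqrt ((s + mi ^ 2 / (2 * s)) ^ 2) :=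
            Real.sqrt_le_sqrt h
        _ = s + mi ^ 2 / (2 * s) := Real.sqrt_sq (by positivity)
    have hS : (0:ℝ) ^ 2 + mi ^ 2 + 2 * (transverseEnergy 0 vT * transverseEnergy mi (t • vT)
        - ⟪vT, t • vT⟫) ≤ (mi + ε) ^ 2 := by
      rw [hE0, hinner]
      have hEi : transverseEnergy mi (t • vT) = Real.sqrt (mi ^ 2 + s ^ 2) := by
        unfold transverseEnergy; rw [hnorm]
      rw [hEi]
      have h1 : ‖vT‖ * Real.sqrt (mi ^ 2 + s ^ 2) - t * ‖vT‖ ^ 2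
          ≤ ‖vT‖ * (mi ^ 2 / (2 * s)) := by
        have := mul_le_mul_of_nonneg_left hsqrt (norm_nonneg vT)
        nlinarith
      have h2 : ‖vT‖ * (mi ^ 2 / (2 * s)) = mi * ε := by
        rw [hs, ht]; field_simp
      nlinarith
    calc transverseMass 0 vT mi (t • vT) ≤ Real.sqrt ((mi + ε) ^ 2) :=
          Real.sqrt_le_sqrt hS
      _ = mi + ε := Real.sqrt_sq (by linarith)

/-- the infimum of the transverse mass over the invisible transverse
momentum `qT` is `m_v + m_i`, attained (for `m_v > 0`) at `qT = (m_i/m_v) • vT`. -/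
theorem iInf_transverseMass_eq (mv mi : ℝ) (hmv : 0 ≤ mv) (hmi : 0 ≤ mi)
    (vT : EuclideanSpace ℝ (Fin 2)) :
    (⨅ qT : EuclideanSpace ℝ (Fin 2), transverseMass mv vT mi qT) = mv + mi ∧
    (0 < mv → transverseMass mv vT mi ((mi / mv) • vT) = mv + mi) := by
  have hbdd : BddBelow (Set.range fun qT => transverseMass mv vT mi qT) := by
    refine ⟨mv + mi, ?_⟩
    rintro y ⟨q, rfl⟩
    exact tm_lower mv mi hmv hmi vT q
  constructor
  · refine le_antisymm ?_ (le_ciInf fun q => tm_lower mv mi hmv hmi vT q)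
    rcases eq_or_lt_of_le hmv with h0 | h0
    · subst h0
      refine le_of_forall_pos_le_add fun ε hε => ?_
      obtain ⟨q, hq⟩ := tm_zero_case mi hmi vT ε hε
      calc (⨅ qT, transverseMass 0 vT mi qT) ≤ transverseMass 0 vT mi q := ciInf_le hbdd q
        _ ≤ mi + ε := hq
        _ = 0 + mi + ε := by ring
    · exact (ciInf_le hbdd ((mi / mv) • vT)).trans_eq (tm_attained mv mi h0 hmi vT)
  · intro h
    exact tm_attained mv mi h hmi vT
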